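/- In the single-incoming-call pull protocol on the complete graph with n nodes, in a round starting with k informed nodes (so n - k uninformed nodes each making one pull call, each informed node answering only the call with the lowest uniformly random order), a fixed uninformed node becomes informed with probability p_k = (k/(n-k)) * (1 - (1 - 1/n)^{n-k}). -/

import Mathlib

open MeasureTheory

open Finset in
private lemma fiber_eq (n k M : ℕ) (σ : Equiv.Perm (Fin M)) (x : Fin M) (v : Fin n)
    (hv : (v : ℕ) < k) :
    (univ.filter (fun f : Fin M → Fin n =>
        (((f x : ℕ) < k ∧ ∀ y, y ≠ x → f y = f x → σ x < σ y)) ∧ f x = v))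
      = Fintype.piFinset (fun y => if y = x then {v} else
          if σ x < σ y then univ else univ.erase v) := by
  ext f
  simp only [mem_filter, mem_univ, true_and, Fintype.mem_piFinset]
  constructor
  · rintro ⟨⟨hfk, hall⟩, hfx⟩ y
    by_cases hy : y = x
    · subst hy; simp [hfx]
    · simp only [hy, if_false]
      by_cases hlt : σ x < σ y
      · simp [hlt]
      · simp only [hlt, if_false, Finset.mem_erase, mem_univ, and_true]
        intro hfy
        exact hlt (hall y hy (by rw [hfy, hfx]))
  · intro h
    have hx := h x
    simp at hx
    refine ⟨⟨by rw [hx]; exact hv, ?_⟩, hx⟩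
    intro y hy hfy
    have hyy := h y
    simp only [hy, if_false] at hyy
    by_cases hlt : σ x < σ y
    · exact hlt
    · simp only [hlt, if_false, Finset.mem_erase, mem_univ, and_true] at hyy
      exact absurd (hfy.trans hx) hyy

open Finset in
private lemma card_informed (n k : ℕ) (hk : k < n) :
    #(univ.filter (fun v : Fin n => (v : ℕ) < k)) = k := by
  have : univ.filter (fun v : Fin n => (v : ℕ) < k) = Finset.Iio (⟨k, hk⟩ : Fin n) := by
    ext v; simp [Finset.mem_Iio, Fin.lt_def]
  rw [this, Fin.card_Iio]

open Finset in
private lemma card_above (M : ℕ) (σ : Equiv.Perm (Fin M)) (x : Fin M) :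
    #((univ.erase x).filter (fun y => σ x < σ y)) = M - 1 - (σ x : ℕ) := by
  have h1 : (univ.erase x).filter (fun y => σ x < σ y)
      = univ.filter (fun y => σ x < σ y) := by
    ext y
    simp only [mem_filter, mem_erase, mem_univ, true_and, and_true]
    constructor
    · rintro ⟨_, h⟩; exact h
    · intro h; exact ⟨fun hyx => absurd (hyx ▸ h) (lt_irrefl _), h⟩
  have h2 : univ.filter (fun y => σ x < σ y)
      = (Finset.Ioi (σ x)).map σ.symm.toEmbedding := by
    ext y
    simp only [mem_filter, mem_univ, true_and, Finset.mem_map, Finset.mem_Ioi,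
      Equiv.coe_toEmbedding]
    constructor
    · intro h; exact ⟨σ y, h, σ.symm_apply_apply y⟩
    · rintro ⟨a, ha, rfl⟩; rwa [σ.apply_symm_apply]
  rw [h1, h2, Finset.card_map, Fin.card_Ioi]

open Finset in
private lemma card_below (M : ℕ) (σ : Equiv.Perm (Fin M)) (x : Fin M) :
    #((univ.erase x).filter (fun y => ¬ σ x < σ y)) = (σ x : ℕ) := by
  have := Finset.card_filter_add_card_filter_not (s := univ.erase x)
    (p := fun y => σ x < σ y)
  rw [card_above, Finset.card_erase_of_mem (mem_univ x), Finset.card_univ,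
    Fintype.card_fin] at this
  have hlt : (σ x : ℕ) < M := (σ x).isLt
  omega

open Finset in
private lemma per_sigma (n k M : ℕ) (hk : k < n) (σ : Equiv.Perm (Fin M)) (x : Fin M) :
    #(univ.filter (fun f : Fin M → Fin n =>
        (f x : ℕ) < k ∧ ∀ y, y ≠ x → f y = f x → σ x < σ y))
      = k * (n ^ (M - 1 - (σ x : ℕ)) * (n - 1) ^ (σ x : ℕ)) := by
  rw [Finset.card_eq_sum_card_fiberwise (f := fun f => f x) (t := univ) (fun _ _ => mem_univ _)]
  rw [← Finset.sum_filter_add_sum_filter_not univ (fun v : Fin n => (v : ℕ) < k)]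
  have hzero : ∑ v ∈ univ.filter (fun v : Fin n => ¬ (v : ℕ) < k),
      #((univ.filter (fun f : Fin M → Fin n =>
        (f x : ℕ) < k ∧ ∀ y, y ≠ x → f y = f x → σ x < σ y)).filter (fun f => f x = v)) = 0 := by
    apply Finset.sum_eq_zero
    intro v hv
    simp only [mem_filter, mem_univ, true_and] at hv
    rw [Finset.card_eq_zero, Finset.filter_eq_empty_iff]
    rintro f hf
    simp only [mem_filter, mem_univ, true_and] at hf
    intro hfx
    exact hv (hfx ▸ hf.1)
  rw [hzero, add_zero]
  have hconst : ∀ v ∈ univ.filter (fun v : Fin n => (v : ℕ) < k),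
      #((univ.filter (fun f : Fin M → Fin n =>
        (f x : ℕ) < k ∧ ∀ y, y ≠ x → f y = f x → σ x < σ y)).filter (fun f => f x = v))
      = n ^ (M - 1 - (σ x : ℕ)) * (n - 1) ^ (σ x : ℕ) := by
    intro v hv
    simp only [mem_filter, mem_univ, true_and] at hv
    rw [Finset.filter_filter, fiber_eq n k M σ x v hv, Fintype.card_piFinset]
    rw [← Finset.mul_prod_erase univ _ (mem_univ x)]
    rw [if_pos rfl, Finset.card_singleton, one_mul]
    have hprod : ∀ y ∈ univ.erase x,
        #(if y = x then ({v} : Finset (Fin n)) else if σ x < σ y then univ else univ.erase v)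
        = if σ x < σ y then n else n - 1 := by
      intro y hy
      rw [if_neg (Finset.mem_erase.mp hy).1]
      by_cases hlt : σ x < σ y
      · rw [if_pos hlt, if_pos hlt, Finset.card_univ, Fintype.card_fin]
      · rw [if_neg hlt, if_neg hlt, Finset.card_erase_of_mem (mem_univ v),
          Finset.card_univ, Fintype.card_fin]
    rw [Finset.prod_congr rfl hprod]
    rw [← Finset.prod_filter_mul_prod_filter_not (univ.erase x) (fun y => σ x < σ y)]
    rw [Finset.prod_congr rfl (fun y hy => if_pos (Finset.mem_filter.mp hy).2),
      Finset.prod_congr rfl (g := fun _ => n - 1)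
        (fun y hy => if_neg (Finset.mem_filter.mp hy).2),
      Finset.prod_const, Finset.prod_const, card_above, card_below]
  rw [Finset.sum_congr rfl hconst, Finset.sum_const, card_informed n k hk, smul_eq_mul]

open Finset in
private lemma count_lemma (n k M : ℕ) (hk : k < n) (x : Fin M) :
    #(univ.filter (fun σf : Equiv.Perm (Fin M) × (Fin M → Fin n) =>
        ((σf.2 x : ℕ) < k) ∧ ∀ y, y ≠ x → σf.2 y = σf.2 x → σf.1 x < σf.1 y))
      = (M - 1).factorial * ∑ j ∈ Finset.range M, k * (n ^ (M - 1 - j) * (n - 1) ^ j) := by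
  have step1 : #(univ.filter (fun σf : Equiv.Perm (Fin M) × (Fin M → Fin n) =>
        ((σf.2 x : ℕ) < k) ∧ ∀ y, y ≠ x → σf.2 y = σf.2 x → σf.1 x < σf.1 y))
      = ∑ σ : Equiv.Perm (Fin M), k * (n ^ (M - 1 - (σ x : ℕ)) * (n - 1) ^ (σ x : ℕ)) := by
    rw [Finset.card_filter, Fintype.sum_prod_type]
    exact Finset.sum_congr rfl fun σ _ => by
      rw [← Finset.card_filter, per_sigma n k M hk σ x]
  rw [step1]
  cases M with
  | zero => exact x.elim0
  | succ m =>
    simp only [Nat.add_sub_cancel]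
    set g : ℕ → ℕ := fun j => k * (n ^ (m - j) * (n - 1) ^ j) with hg
    have h1 : ∑ σ : Equiv.Perm (Fin (m + 1)), g ((σ x : ℕ))
        = ∑ σ : Equiv.Perm (Fin (m + 1)), g ((σ 0 : ℕ)) := by
      rw [← Equiv.sum_comp (Equiv.mulRight (Equiv.swap 0 x))
        (fun σ : Equiv.Perm (Fin (m + 1)) => g ((σ x : ℕ)))]
      apply Finset.sum_congr rfl
      intro σ _
      simp [Equiv.Perm.mul_apply, Equiv.swap_apply_right]
    have h2 : ∑ σ : Equiv.Perm (Fin (m + 1)), g ((σ 0 : ℕ))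
        = ∑ pe : Fin (m + 1) × Equiv.Perm (Fin m), g ((pe.1 : ℕ)) := by
      rw [← Equiv.sum_comp (Equiv.Perm.decomposeFin.symm)
        (fun σ : Equiv.Perm (Fin (m + 1)) => g ((σ 0 : ℕ)))]
      exact Finset.sum_congr rfl fun pe _ => by
        rw [Equiv.Perm.decomposeFin_symm_apply_zero]
    rw [h1, h2, Fintype.sum_prod_type]
    simp only [Finset.sum_const, Finset.card_univ, Fintype.card_perm, Fintype.card_fin,
      smul_eq_mul]
    rw [← Finset.mul_sum, Fin.sum_univ_eq_sum_range (fun j => g j) (m + 1)]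

/-- Single-incoming-call pull protocol, in a round with `k` informed nodes (targets with
index `< k` are informed) and `n - k` uninformed callers.  A uniformly random order
(permutation) is placed on the callers and each caller targets a uniformly random node;
a node answers only the incoming call of lowest order.  The fixed uninformed caller `x`
becomes informed iff its target is informed and its call has the lowest order among all
calls to that target. -/
theorem single_call_pull_success_probability (n k : ℕ) (hn : 0 < n) (hk : k < n)
    (x : Fin (n - k)) :
    letI : MeasurableSpace (Equiv.Perm (Fin (n - k))) := ⊤
    ((@PMF.uniformOfFintype (Equiv.Perm (Fin (n - k)) × (Fin (n - k) → Fin n)) _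
        ⟨⟨Equiv.refl _, fun _ => ⟨0, hn⟩⟩⟩).toMeasure
      {σf | ((σf.2 x : ℕ) < k) ∧
        ∀ y : Fin (n - k), y ≠ x → σf.2 y = σf.2 x → σf.1 x < σf.1 y}).toReal
      = ((k : ℝ) / ((n : ℝ) - k)) * (1 - (1 - 1 / (n : ℝ)) ^ (n - k)) := by
  classical
  letI : MeasurableSpace (Equiv.Perm (Fin (n - k))) := ⊤
  haveI : Nonempty (Equiv.Perm (Fin (n - k)) × (Fin (n - k) → Fin n)) :=
    ⟨⟨Equiv.refl _, fun _ => ⟨0, hn⟩⟩⟩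
  have hMpos : 0 < n - k := by omega
  rw [PMF.toMeasure_uniformOfFintype_apply _ ((Set.to_countable _).measurableSet)]
  have hcard2 : Fintype.card (Equiv.Perm (Fin (n - k)) × (Fin (n - k) → Fin n))
      = (n - k).factorial * n ^ (n - k) := by
    simp [Fintype.card_perm, Fintype.card_fun, Fintype.card_fin]
  rw [← Set.toFinset_card, Set.toFinset_setOf]
  rw [Finset.filter_congr_decidable, count_lemma n k (n - k) hk x, hcard2, ENNReal.toReal_div]
  simp only [ENNReal.toReal_natCast]
  have h1n : (1:ℕ) ≤ n := hn
  have hsum : ((∑ j ∈ Finset.range (n - k), k * (n ^ (n - k - 1 - j) * (n - 1) ^ j) : ℕ) : ℝ)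
      = k * ((n : ℝ) ^ (n - k) - ((n : ℝ) - 1) ^ (n - k)) := by
    push_cast [Nat.cast_sub h1n]
    rw [← Finset.mul_sum]
    congr 1
    have hg := geom_sum₂_mul ((n : ℝ) - 1) (n : ℝ) (n - k)
    have he : ((n : ℝ) - 1) - n = -1 := by ring
    rw [he] at hg
    have hs : ∑ i ∈ Finset.range (n - k), ((n : ℝ) - 1) ^ i * (n : ℝ) ^ (n - k - 1 - i)
        = (n : ℝ) ^ (n - k) - ((n : ℝ) - 1) ^ (n - k) := by linarith
    rw [← hs]
    exact Finset.sum_congr rfl fun j _ => by ring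
  have hfact : ((n - k).factorial : ℝ) = ((n - k : ℕ) : ℝ) * ((n - k - 1).factorial : ℝ) := by
    rw [← Nat.mul_factorial_pred hMpos.ne']
    push_cast
    ring
  have hcast : ((n - k : ℕ) : ℝ) = (n : ℝ) - k := Nat.cast_sub hk.le
  have hMne : ((n : ℝ) - k) ≠ 0 := by
    rw [← hcast]
    exact_mod_cast hMpos.ne'
  have hnne : (n : ℝ) ≠ 0 := Nat.cast_ne_zero.mpr hn.ne'
  have hne1 : ((n - k - 1).factorial : ℝ) ≠ 0 :=
    Nat.cast_ne_zero.mpr (Nat.factorial_ne_zero _)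
  rw [Nat.cast_mul, hsum, Nat.cast_mul, Nat.cast_pow, hfact, hcast]
  have hone : (1 : ℝ) - 1 / n = ((n : ℝ) - 1) / n := by field_simp
  rw [hone, div_pow]
  field_simp
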